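/- Suppose the grading (g_j)_{j∈ℤ} of M_N(ℂ) is good for the nilpotent matrix e ∈ g₂. Then for every j ≤ −1 the linear map ad e : g_j → g_{j+2}, x ↦ ex − xe, is injective, and for every j ≥ −1 it is surjective. -/

import Mathlib

/-- The `ad h`-eigenspace grading of `M_N(ℂ)`:
`g_j = {x ∈ M_N(ℂ) : hx − xh = j·x}`. -/
noncomputable def adGrading {N : ℕ} (h : Matrix (Fin N) (Fin N) ℂ) (j : ℤ) :
    Submodule ℂ (Matrix (Fin N) (Fin N) ℂ) where
  carrier := {x | h * x - x * h = (j : ℂ) • x}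
  zero_mem' := by simp
  add_mem' := by
    intro a b ha hb
    simp only [Set.mem_setOf_eq] at ha hb ⊢
    rw [smul_add, ← ha, ← hb]
    noncomm_ring
  smul_mem' := by
    intro c a ha
    simp only [Set.mem_setOf_eq] at ha ⊢
    rw [mul_smul_comm, smul_mul_assoc, ← smul_sub, ha]
    exact smul_comm _ _ _

section Aux

open Matrix

variable {N : ℕ}

private lemma mem_adGrading_iff {h x : Matrix (Fin N) (Fin N) ℂ} {j : ℤ} :
    x ∈ adGrading h j ↔ h * x - x * h = (j : ℂ) • x := Iff.rfl

/-- The trace form on matrices is faithful. -/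
private lemma trace_faithful (x : Matrix (Fin N) (Fin N) ℂ)
    (hx : ∀ z : Matrix (Fin N) (Fin N) ℂ, (x * z).trace = 0) : x = 0 := by
  ext i j
  have := hx (Matrix.single j i 1)
  simp only [Matrix.trace, Matrix.diag, Matrix.mul_apply, Matrix.single,
    Matrix.of_apply, mul_ite, mul_one, mul_zero, ite_and, Finset.sum_ite_eq,
    Finset.mem_univ, if_true] at this
  simpa using this

/-- Cyclic invariance of the trace. -/
private lemma trace_cyc (a b c : Matrix (Fin N) (Fin N) ℂ) :
    (a * b * c).trace = (c * a * b).trace := by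
  rw [Matrix.trace_mul_comm, mul_assoc]

/-- Graded pieces of different total degree are trace-orthogonal. -/
private lemma trace_ortho (h : Matrix (Fin N) (Fin N) ℂ) {j k : ℤ} (hjk : j + k ≠ 0)
    {x y : Matrix (Fin N) (Fin N) ℂ}
    (hx : x ∈ adGrading h j) (hy : y ∈ adGrading h k) : (x * y).trace = 0 := by
  have hx' : h * x - x * h = (j : ℂ) • x := hx
  have hy' : h * y - y * h = (k : ℂ) • y := hy
  have key : ((j : ℂ) + k) • (x * y) = h * (x * y) - (x * y) * h := by
    have : (h * x - x * h) * y + x * (h * y - y * h) = h * (x * y) - (x * y) * h := by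
      noncomm_ring
    rw [← this, hx', hy', smul_mul_assoc, mul_smul_comm, add_smul]
  have t : (((j : ℂ) + k) • (x * y)).trace = 0 := by
    rw [key, Matrix.trace_sub, Matrix.trace_mul_comm, sub_self]
  rw [Matrix.trace_smul, smul_eq_mul] at t
  have hne : ((j : ℂ) + k) ≠ 0 := by
    rw [← Int.cast_add]
    exact_mod_cast hjk
  exact (mul_eq_zero.mp t).resolve_left hne

/-- The trace pairing between `g_j` and `g_{-j}` is nondegenerate. -/
private lemma graded_nondeg (h : Matrix (Fin N) (Fin N) ℂ)
    (hinternal : DirectSum.IsInternal (adGrading h)) {j : ℤ}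
    {x : Matrix (Fin N) (Fin N) ℂ} (hx : x ∈ adGrading h j)
    (hx0 : ∀ y ∈ adGrading h (-j), (x * y).trace = 0) : x = 0 := by
  apply trace_faithful
  intro z
  set φ : Matrix (Fin N) (Fin N) ℂ →ₗ[ℂ] ℂ :=
    (Matrix.traceLinearMap (Fin N) ℂ ℂ).comp (LinearMap.mulLeft ℂ x) with hφ
  have hker : (⨆ k, adGrading h k) ≤ LinearMap.ker φ := by
    refine iSup_le fun k y hy => ?_
    simp only [hφ, LinearMap.mem_ker, LinearMap.comp_apply, LinearMap.mulLeft_apply,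
      Matrix.traceLinearMap_apply]
    by_cases hk : k = -j
    · exact hx0 y (hk ▸ hy)
    · exact trace_ortho h (by omega) hx hy
  have hz : z ∈ (⨆ k, adGrading h k) := by
    rw [hinternal.submodule_iSup_eq_top]; trivial
  simpa [hφ] using hker hz

/-- `ad e` shifts the grading by `2`. -/
private lemma adE_mem (h e : Matrix (Fin N) (Fin N) ℂ) (he : e ∈ adGrading h 2) {j : ℤ}
    {x : Matrix (Fin N) (Fin N) ℂ} (hx : x ∈ adGrading h j) :
    e * x - x * e ∈ adGrading h (j + 2) := by
  have he' : h * e - e * h = ((2 : ℤ) : ℂ) • e := he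
  have hx' : h * x - x * h = (j : ℂ) • x := hx
  show h * (e * x - x * e) - (e * x - x * e) * h = ((j + 2 : ℤ) : ℂ) • (e * x - x * e)
  have expand : h * (e * x - x * e) - (e * x - x * e) * h =
      ((h * e - e * h) * x - x * (h * e - e * h)) +
      (e * (h * x - x * h) - (h * x - x * h) * e) := by noncomm_ring
  rw [expand, he', hx', smul_mul_assoc, mul_smul_comm, mul_smul_comm, smul_mul_assoc,
    ← smul_sub, ← smul_sub]
  push_cast
  rw [add_smul]
  ring_nf
  module

end Aux

/-- Suppose the grading `(g_j)` of `M_N(ℂ)` is good for the nilpotent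
matrix `e ∈ g₂`.  Then for every `j ≤ −1` the map `ad e : g_j → g_{j+2}`, `x ↦ ex − xe`,
is injective, and for every `j ≥ −1` it is surjective. -/
theorem stmt6 {N : ℕ} (h e : Matrix (Fin N) (Fin N) ℂ)
    (hinternal : DirectSum.IsInternal (adGrading h))
    (hnil : IsNilpotent e)
    (he : e ∈ adGrading h 2)
    (hgood : ∀ x : Matrix (Fin N) (Fin N) ℂ, x * e = e * x →
      x ∈ ⨆ j ≥ (0 : ℤ), adGrading h j) :
    (∀ j : ℤ, j ≤ -1 → ∀ x ∈ adGrading h j, e * x - x * e = 0 → x = 0) ∧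
    (∀ j : ℤ, -1 ≤ j → ∀ y ∈ adGrading h (j + 2), ∃ x ∈ adGrading h j,
      e * x - x * e = y) := by
  classical
  -- injectivity
  have inj : ∀ j : ℤ, j ≤ -1 → ∀ x ∈ adGrading h j, e * x - x * e = 0 → x = 0 := by
    intro j hj x hx hcomm
    have hxe : x * e = e * x := by
      have := sub_eq_zero.mp hcomm
      exact this.symm
    have hx' : x ∈ ⨆ k ≥ (0 : ℤ), adGrading h k := hgood x hxe
    have hle : (⨆ k ≥ (0 : ℤ), adGrading h k) ≤
        ⨆ (k : ℤ) (_ : k ≠ j), adGrading h k := by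
      refine iSup₂_le fun k hk => le_iSup₂_of_le k (by omega) le_rfl
    have hdisj := hinternal.submodule_iSupIndep j
    have : x ∈ (⊥ : Submodule ℂ (Matrix (Fin N) (Fin N) ℂ)) :=
      hdisj.le_bot ⟨hx, hle hx'⟩
    simpa using this
  refine ⟨inj, ?_⟩
  intro j hj y hy
  -- the map ad e on matrices
  set adE : Matrix (Fin N) (Fin N) ℂ →ₗ[ℂ] Matrix (Fin N) (Fin N) ℂ :=
    LinearMap.mulLeft ℂ e - LinearMap.mulRight ℂ e with hadE
  have adE_apply : ∀ x, adE x = e * x - x * e := by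
    intro x; simp [hadE]
  -- image of g_j under ad e
  set W : Submodule ℂ (Matrix (Fin N) (Fin N) ℂ) :=
    Submodule.map adE (adGrading h j) with hW
  have hWle : W ≤ adGrading h (j + 2) := by
    rintro _ ⟨x, hx, rfl⟩
    rw [adE_apply]
    exact adE_mem h e he hx
  -- the trace pairing as a bilinear map
  set B : Matrix (Fin N) (Fin N) ℂ →ₗ[ℂ] Matrix (Fin N) (Fin N) ℂ →ₗ[ℂ] ℂ :=
    LinearMap.mk₂ ℂ (fun x y => (x * y).trace)
      (fun x x' y => by simp [add_mul])
      (fun c x y => by simp [Matrix.smul_mul])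
      (fun x y y' => by simp [mul_add])
      (fun c x y => by simp [Matrix.mul_smul]) with hB
  have B_apply : ∀ x y, B x y = (x * y).trace := fun x y => rfl
  -- Θ : g_{-(j+2)} → Dual W, nondegenerate pairing against W
  set Θ : (adGrading h (-(j + 2))) →ₗ[ℂ] Module.Dual ℂ W :=
    (W.subtype.dualMap).comp (B.flip.comp (adGrading h (-(j + 2))).subtype) with hΘ
  have Θ_apply : ∀ (z : adGrading h (-(j + 2))) (w : W),
      Θ z w = ((w : Matrix (Fin N) (Fin N) ℂ) * (z : Matrix (Fin N) (Fin N) ℂ)).trace :=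
    fun z w => rfl
  have hΘinj : Function.Injective Θ := by
    rw [← LinearMap.ker_eq_bot, eq_bot_iff]
    rintro ⟨z, hz⟩ hzk
    have hz0 : ∀ w ∈ W, (w * z).trace = 0 := by
      intro w hw
      have := congrFun (congrArg DFunLike.coe (LinearMap.mem_ker.mp hzk)) ⟨w, hw⟩
      simpa [Θ_apply] using this
    -- z pairs to zero against all of [e, g_j]; deduce [e,z] = 0
    have hez : e * z - z * e ∈ adGrading h (-j) := by
      have := adE_mem h e he hz
      have hcast : -(j + 2) + 2 = -j := by ring
      rwa [hcast] at this
    have hez0 : e * z - z * e = 0 := by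
      apply graded_nondeg h hinternal hez
      intro u hu
      have hu' : u ∈ adGrading h j := by
        have : -(-j) = j := by ring
        rwa [this] at hu
      have hmem : e * u - u * e ∈ W := ⟨u, hu', by rw [adE_apply]⟩
      have h0 : ((e * u - u * e) * z).trace = 0 := hz0 _ hmem
      -- trace((e z - z e) u) = - trace((e u - u e) z)
      have hswap : ((e * z - z * e) * u).trace = -(((e * u - u * e) * z).trace) := by
        rw [sub_mul, sub_mul, Matrix.trace_sub, Matrix.trace_sub]
        rw [show e * z * u = e * z * u from rfl]
        have h1 : (e * z * u).trace = (u * e * z).trace := trace_cyc e z u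
        have h2 : (z * e * u).trace = (e * u * z).trace := by
          rw [trace_cyc z e u, trace_cyc u z e]
        rw [h1, h2]; ring
      rw [hswap, h0, neg_zero]
    have hz0' : z = 0 := inj (-(j + 2)) (by omega) z hz hez0
    simpa [Submodule.mem_bot, Subtype.ext_iff] using hz0'
  -- Ξ : g_{j+2} → Dual g_{-(j+2)}, injective by nondegeneracy of the pairing
  set Ξ : (adGrading h (j + 2)) →ₗ[ℂ] Module.Dual ℂ (adGrading h (-(j + 2))) :=
    ((adGrading h (-(j + 2))).subtype.dualMap).comp
      (B.comp (adGrading h (j + 2)).subtype) with hΞ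
  have hΞinj : Function.Injective Ξ := by
    rw [← LinearMap.ker_eq_bot, eq_bot_iff]
    rintro ⟨z, hz⟩ hzk
    have hz0 : ∀ u ∈ adGrading h (-(j + 2)), (z * u).trace = 0 := by
      intro u hu
      have := congrFun (congrArg DFunLike.coe (LinearMap.mem_ker.mp hzk)) ⟨u, hu⟩
      simpa [hΞ, B_apply] using this
    have hz0' : z = 0 := graded_nondeg h hinternal hz hz0
    simpa [Submodule.mem_bot, Subtype.ext_iff] using hz0'
  -- dimension count
  have d1 : Module.finrank ℂ (adGrading h (-(j + 2))) ≤ Module.finrank ℂ W := by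
    have := LinearMap.finrank_le_finrank_of_injective hΘinj
    rwa [Subspace.dual_finrank_eq] at this
  have d2 : Module.finrank ℂ (adGrading h (j + 2)) ≤
      Module.finrank ℂ (adGrading h (-(j + 2))) := by
    have := LinearMap.finrank_le_finrank_of_injective hΞinj
    rwa [Subspace.dual_finrank_eq] at this
  have hWeq : W = adGrading h (j + 2) :=
    Submodule.eq_of_le_of_finrank_le hWle (le_trans d2 d1)
  have hyW : y ∈ W := hWeq ▸ hy
  obtain ⟨x, hx, hxy⟩ := hyW
  exact ⟨x, hx, by rw [← adE_apply]; exact hxy⟩
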